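/- Let G be a finite simple graph with maximum degree at most 3 and girth at least 8, such that 20·γ(G) ≥ w(G) and every nonempty proper induced subgraph H of G satisfies 20·γ(H) < w(H). Then G contains no sequence (1,3,2), i.e., there is no path of three distinct vertices v, u, x with vu and ux edges of G, deg_G(v) = 1, deg_G(u) = 3, and deg_G(x) = 2. -/

import Mathlib

open Finset

/-- The domination number: minimum size of a dominating set. -/
noncomputable def gamma {V : Type*} [Fintype V] (G : SimpleGraph V) : ℕ :=
  sInf {n | ∃ D : Finset V, D.card = n ∧ ∀ v : V, v ∈ D ∨ ∃ u ∈ D, G.Adj u v}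

/-- The degree of a vertex. -/
noncomputable def gdeg {V : Type*} (G : SimpleGraph V) (v : V) : ℕ :=
  Nat.card (G.neighborSet v)

/-- Weight of a vertex of degree `d` (for graphs of maximum degree at most 3). -/
def wt (d : ℕ) : ℕ :=
  if d = 0 then 20 else if d = 1 then 15 else if d = 2 then 11 else 7

/-- Total weight of a graph: `w(G) = Σ_v w_G(v)`. -/
noncomputable def wsum {V : Type*} [Fintype V] (G : SimpleGraph V) : ℕ :=
  ∑ v : V, wt (gdeg G v)

lemma wt_le {a b : ℕ} (hab : a ≤ b) (hb : b ≤ 3) : wt a ≤ wt b + 5 * (b - a) := by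
  interval_cases b <;> interval_cases a <;> decide

lemma wt_ge7 (d : ℕ) : 7 ≤ wt d := by
  unfold wt; split_ifs <;> omega

lemma gamma_le {V : Type*} [Fintype V] (G : SimpleGraph V) (D : Finset V)
    (h : ∀ v : V, v ∈ D ∨ ∃ u ∈ D, G.Adj u v) : gamma G ≤ D.card :=
  Nat.sInf_le ⟨D, rfl, h⟩

lemma exists_min_dom {V : Type*} [Fintype V] (G : SimpleGraph V) :
    ∃ D : Finset V, D.card = gamma G ∧ ∀ v : V, v ∈ D ∨ ∃ u ∈ D, G.Adj u v := by
  have hne : {n | ∃ D : Finset V, D.card = n ∧ ∀ v : V, v ∈ D ∨ ∃ u ∈ D, G.Adj u v}.Nonempty :=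
    ⟨(univ : Finset V).card, univ, rfl, fun v => Or.inl (mem_univ v)⟩
  exact Nat.sInf_mem hne

lemma gdeg_eq_card {V : Type*} [Fintype V] [DecidableEq V] (G : SimpleGraph V)
    [DecidableRel G.Adj] (w : V) :
    gdeg G w = (univ.filter (fun a => G.Adj w a)).card := by
  rw [gdeg, Nat.card_coe_set_eq, Set.ncard_eq_toFinset_card']
  simp [SimpleGraph.neighborSet]
  congr 1
  ext a
  show a ∈ (G.neighborSet w).toFinset ↔ _
  rw [Set.mem_toFinset]
  simp

lemma gdeg_induce {V : Type*} [Fintype V] [DecidableEq V] (G : SimpleGraph V)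
    [DecidableRel G.Adj] (T : Finset V) (w : V) (hw : w ∈ (↑T : Set V)) :
    gdeg (G.induce (↑T : Set V)) ⟨w, hw⟩ = (T.filter (fun a => G.Adj w a)).card := by
  rw [gdeg]
  have he : (G.induce (↑T : Set V)).neighborSet ⟨w, hw⟩ ≃ {a : V | a ∈ T ∧ G.Adj w a} :=
    ⟨fun a => ⟨↑a.1, a.1.2, a.2⟩, fun a => ⟨⟨a.1, a.2.1⟩, a.2.2⟩, fun a => rfl, fun a => rfl⟩
  rw [Nat.card_congr he, Nat.card_coe_set_eq, Set.ncard_eq_toFinset_card']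
  congr 1
  ext a
  simp

theorem no_seq_1_3_2 {V : Type*} [Fintype V] (G : SimpleGraph V)
    (hdeg : ∀ v : V, gdeg G v ≤ 3)
    (hgirth : ∀ (v : V) (c : G.Walk v v), c.IsCycle → 8 ≤ c.length)
    (hG : wsum G ≤ 20 * gamma G)
    (hmin : ∀ T : Finset V, T.Nonempty → T ≠ Finset.univ →
      20 * gamma (G.induce (↑T : Set V)) < wsum (G.induce (↑T : Set V))) :
    ¬ ∃ v u x : V, v ≠ x ∧ G.Adj v u ∧ G.Adj u x ∧
      gdeg G v = 1 ∧ gdeg G u = 3 ∧ gdeg G x = 2 := by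
  classical
  rintro ⟨v, u, x, hvx, hvu, hux, hdv, hdu, hdx⟩
  have hvu' : v ≠ u := hvu.ne
  have hux' : u ≠ x := hux.ne
  set N : V → Finset V := fun w => univ.filter (fun a => G.Adj w a) with hNdef
  have hNcard : ∀ w, (N w).card = gdeg G w := fun w => (gdeg_eq_card G w).symm
  -- find the third neighbor y of u
  obtain ⟨y, hyNu, hyvx⟩ : ∃ y ∈ N u, y ∉ ({v, x} : Finset V) := by
    by_contra hcon
    push_neg at hcon
    have hsub2 : N u ⊆ {v, x} := hcon
    have h1 := Finset.card_le_card hsub2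
    have h2 : ({v, x} : Finset V).card = 2 := card_pair hvx
    have h3 := hNcard u
    omega
  have hyu : G.Adj u y := by simpa [hNdef] using hyNu
  have hyv : y ≠ v := by simp only [mem_insert, mem_singleton] at hyvx; tauto
  have hyx : y ≠ x := by simp only [mem_insert, mem_singleton] at hyvx; tauto
  have huy : u ≠ y := hyu.ne
  set D : Finset V := {v, u, x, y} with hDdef
  have hvD : v ∈ D := by simp [hDdef]
  have huD : u ∈ D := by simp [hDdef]
  have hxD : x ∈ D := by simp [hDdef]
  have hyD : y ∈ D := by simp [hDdef]
  -- N u = {v, x, y}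
  have hNu : N u = {v, x, y} := by
    refine (Finset.eq_of_subset_of_card_le ?_ ?_).symm
    · intro a ha
      simp only [mem_insert, mem_singleton] at ha
      simp only [hNdef, mem_filter, mem_univ, true_and]
      rcases ha with rfl | rfl | rfl
      · exact hvu.symm
      · exact hux
      · exact hyu
    · rw [hNcard u, hdu]
      have hvnotin : v ∉ ({x, y} : Finset V) := by simp [hvx, hyv.symm]
      have hxnotin : x ∉ ({y} : Finset V) := by simp [hyx.symm]
      have h1 : ({v, x, y} : Finset V).card = 3 := by
        rw [Finset.card_insert_of_notMem hvnotin, Finset.card_insert_of_notMem hxnotin,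
            Finset.card_singleton]
      omega
  -- the sum over D of vertex weights
  have hsumD : ∀ f : V → ℕ, ∑ d ∈ D, f d = f v + f u + f x + f y := by
    intro f
    rw [hDdef]
    rw [Finset.sum_insert (by simp [hvu', hvx, hyv.symm]),
        Finset.sum_insert (by simp [hux', huy]),
        Finset.sum_insert (by simp [hyx.symm]), Finset.sum_singleton]
    ring
  by_cases hT : (Dᶜ : Finset V).Nonempty
  · -- main case
    set T : Finset V := Dᶜ with hTdef
    have hTne : T ≠ univ := by
      intro h
      have : v ∈ T := h ▸ mem_univ v
      simp [hTdef, hvD] at this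
    have hkey := hmin T hT hTne
    set H := G.induce (↑T : Set V) with hHdef
    -- (A) gamma G ≤ gamma H + 1
    obtain ⟨DH, hDHcard, hDHdom⟩ := exists_min_dom H
    have hA : gamma G ≤ gamma H + 1 := by
      set DG : Finset V := DH.image Subtype.val ∪ {u} with hDGdef
      have huDG : u ∈ DG := mem_union_right _ (mem_singleton_self u)
      have hdomG : ∀ w : V, w ∈ DG ∨ ∃ a ∈ DG, G.Adj a w := by
        intro w
        by_cases hw : w ∈ T
        · have hw' : w ∈ (↑T : Set V) := hw
          rcases hDHdom ⟨w, hw'⟩ with h | ⟨a, ha, hadj⟩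
          · exact Or.inl (mem_union_left _ (Finset.mem_image_of_mem _ h))
          · exact Or.inr ⟨↑a, mem_union_left _ (Finset.mem_image_of_mem _ ha), hadj⟩
        · have hwD : w ∈ D := by simpa [hTdef] using hw
          rw [hDdef] at hwD
          simp only [mem_insert, mem_singleton] at hwD
          rcases hwD with rfl | rfl | rfl | rfl
          · exact Or.inr ⟨u, huDG, hvu.symm⟩
          · exact Or.inl huDG
          · exact Or.inr ⟨u, huDG, hux⟩
          · exact Or.inr ⟨u, huDG, hyu⟩
      have hle1 := gamma_le G DG hdomG
      have hle2 : DG.card ≤ DH.card + 1 := by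
        have h1 := Finset.card_union_le (DH.image (Subtype.val : ↥(↑T : Set V) → V)) {u}
        have h2 := Finset.card_image_le (f := (Subtype.val : ↥(↑T : Set V) → V)) (s := DH)
        rw [hDGdef]
        simp only [card_singleton] at h1 ⊢
        omega
      omega

    -- (B) wsum H + 20 ≤ wsum G
    have hB : wsum H + 20 ≤ wsum G := by
      set F : V → ℕ := fun w => if h : w ∈ (↑T : Set V) then wt (gdeg H ⟨w, h⟩) else 0 with hFdef
      have hwsumH : wsum H = ∑ w ∈ T, F w := by
        rw [wsum]
        rw [← Finset.sum_finset_coe (f := F) (s := T)]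
        apply Finset.sum_congr rfl
        intro i _
        simp only [hFdef]
        rw [dif_pos i.2]
      set cross : V → ℕ := fun w => (D.filter (fun d => G.Adj w d)).card with hcrossdef
      -- pointwise bound
      have hpt : ∀ w ∈ T, F w ≤ wt (gdeg G w) + 5 * cross w := by
        intro w hw
        have hw' : w ∈ (↑T : Set V) := hw
        have hF : F w = wt (gdeg (G.induce (↑T : Set V)) ⟨w, hw'⟩) := dif_pos hw'
        rw [hF, gdeg_induce]
        have hsplit : (T.filter (fun a => G.Adj w a)).card + cross w = gdeg G w := by
          have h1 : N w ∩ D = D.filter (fun d => G.Adj w d) := by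
            ext a; simp [hNdef, and_comm]
          have h2 : N w \ D = T.filter (fun a => G.Adj w a) := by
            ext a; simp [hNdef, hTdef, and_comm]
          have h3 := Finset.card_inter_add_card_sdiff (N w) D
          rw [h1, h2, hNcard w] at h3
          have h4 : cross w = (D.filter (fun d => G.Adj w d)).card := rfl
          omega
        have hle : (T.filter (fun a => G.Adj w a)).card ≤ gdeg G w := by omega
        calc wt (T.filter (fun a => G.Adj w a)).card
            ≤ wt (gdeg G w) + 5 * (gdeg G w - (T.filter (fun a => G.Adj w a)).card) :=
              wt_le hle (hdeg w)
          _ = wt (gdeg G w) + 5 * cross w := by omega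
      -- edge counting : ∑ w ∈ T, cross w ≤ 3
      have hcount : ∑ w ∈ T, cross w ≤ 3 := by
        have hswap : ∑ w ∈ T, cross w = ∑ d ∈ D, (T.filter (fun a => G.Adj d a)).card := by
          simp only [hcrossdef, Finset.card_filter]
          rw [Finset.sum_comm]
          apply Finset.sum_congr rfl
          intro d _
          apply Finset.sum_congr rfl
          intro w _
          simp [G.adj_comm]
        -- generic bound
        have hbound : ∀ d u' : V, G.Adj d u' → u' ∈ D →
            (T.filter (fun a => G.Adj d a)).card + 1 ≤ gdeg G d := by
          intro d u' hadj hu'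
          have hsub : T.filter (fun a => G.Adj d a) ⊆ (N d).erase u' := by
            intro a ha
            simp only [mem_filter] at ha
            refine Finset.mem_erase.2 ⟨?_, by simp [hNdef, ha.2]⟩
            intro h; subst h
            simp [hTdef, hu'] at ha
          have h1 := Finset.card_le_card hsub
          have h2 : ((N d).erase u').card = (N d).card - 1 :=
            Finset.card_erase_of_mem (by simp [hNdef, hadj])
          have h3 : 1 ≤ (N d).card := Finset.card_pos.2 ⟨u', by simp [hNdef, hadj]⟩
          have h4 := hNcard d
          omega
        have hu0 : (T.filter (fun a => G.Adj u a)).card = 0 := by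
          rw [Finset.card_eq_zero]
          ext a
          simp only [mem_filter, Finset.notMem_empty, iff_false, not_and]
          intro haT hadj
          have : a ∈ N u := by simp [hNdef, hadj]
          rw [hNu] at this
          simp only [mem_insert, mem_singleton] at this
          have haD : a ∈ D := by rcases this with rfl | rfl | rfl <;> assumption
          simp [hTdef, haD] at haT
        have hv1 := hbound v u hvu huD
        have hx1 := hbound x u hux.symm huD
        have hy1 := hbound y u hyu.symm huD
        rw [hswap, hsumD]
        have := hdeg y
        rw [hdv] at hv1; rw [hdx] at hx1
        omega
      -- assemble
      have hTle : ∑ w ∈ T, F w ≤ (∑ w ∈ T, wt (gdeg G w)) + 5 * ∑ w ∈ T, cross w := by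
        calc ∑ w ∈ T, F w ≤ ∑ w ∈ T, (wt (gdeg G w) + 5 * cross w) := Finset.sum_le_sum hpt
          _ = (∑ w ∈ T, wt (gdeg G w)) + 5 * ∑ w ∈ T, cross w := by
              rw [Finset.sum_add_distrib, Finset.mul_sum]
      have hsplitG : (∑ w ∈ T, wt (gdeg G w)) + ∑ w ∈ D, wt (gdeg G w) = wsum G :=
        Finset.sum_compl_add_sum D _
      have hDsum : ∑ d ∈ D, wt (gdeg G d) = wt 1 + wt 3 + wt 2 + wt (gdeg G y) := by
        rw [hsumD, hdv, hdu, hdx]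
      have hy7 := wt_ge7 (gdeg G y)
      have : wt 1 + wt 3 + wt 2 = 33 := by decide
      omega
    omega
  · -- degenerate case : V = {v, u, x, y}
    have hDuniv : D = univ := by
      rw [Finset.not_nonempty_iff_eq_empty, Finset.compl_eq_empty_iff] at hT
      exact hT
    have hg1 : gamma G ≤ 1 := by
      have h := gamma_le G {u} ?_
      · simpa using h
      · intro w
        have hwD : w ∈ D := hDuniv ▸ mem_univ w
        rw [hDdef] at hwD
        simp only [mem_insert, mem_singleton] at hwD
        have huS : u ∈ ({u} : Finset V) := mem_singleton_self u
        rcases hwD with rfl | rfl | rfl | rfl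
        · exact Or.inr ⟨u, huS, hvu.symm⟩
        · exact Or.inl huS
        · exact Or.inr ⟨u, huS, hux⟩
        · exact Or.inr ⟨u, huS, hyu⟩
    have hws : 40 ≤ wsum G := by
      have : wsum G = ∑ d ∈ D, wt (gdeg G d) := by rw [wsum, hDuniv]
      rw [this, hsumD, hdv, hdu, hdx]
      have := wt_ge7 (gdeg G y)
      have h33 : wt 1 + wt 3 + wt 2 = 33 := by decide
      omega
    omega
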